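/- arXiv:2409.07915 — 4 statements merged into one kernel-verified Lean document; each statement's English description precedes it below -/
import Mathlib

section
/- Let b_1, …, b_k (k ≥ 1) be integers with b_i ≥ 2, and let c_1, …, c_ℓ be the 'dual' sequence obtained by the rule: if (b_1,…,b_k) = (n₀·2, m₁+3, n₁·2, m₂+3, …, m_s+3, n_s·2) with n_i ≥ 0 and m_i ≥ 0 (where n·2 denotes n copies of 2), then (c_1,…,c_ℓ) = (n₀+1) if s = 0, and (c_1,…,c_ℓ) = (n₀+2, m₁·2, n₁+3, …, m_s·2, n_s+2) if s > 0. Then (b_1,…,b_k) = (c_1,…,c_ℓ) (in particular k = ℓ) if and only if k = 1 and b_1 = 2. -/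
/-- The sequence `(n₀·2, m₁+3, n₁·2, m₂+3, …, m_s+3, n_s·2)`, where `n·2` denotes `n`
copies of `2`.  Here `n 0, …, n s` and `m 1, …, m s` encode the decomposition of a
sequence of integers `≥ 2` into runs of `2`'s separated by entries `≥ 3`. -/
def buildB (s : ℕ) (n m : ℕ → ℕ) : List ℤ :=
  List.replicate (n 0) 2 ++
    (List.range s).flatMap (fun i => ((m (i + 1) : ℤ) + 3) :: List.replicate (n (i + 1)) 2)

/-- The dual sequence: `(n₀+1)` if `s = 0`, and
`(n₀+2, m₁·2, n₁+3, …, m_s·2, n_s+2)` if `s > 0`. -/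
def buildC (s : ℕ) (n m : ℕ → ℕ) : List ℤ :=
  if s = 0 then [(n 0 : ℤ) + 1]
  else ((n 0 : ℤ) + 2) ::
    (List.range s).flatMap (fun i =>
      List.replicate (m (i + 1)) (2 : ℤ) ++ [(n (i + 1) : ℤ) + if i + 1 = s then 2 else 3])

/-- Let `b_1, …, b_k` (`k ≥ 1`) be integers `≥ 2`, decomposed as
`(n₀·2, m₁+3, n₁·2, …, m_s+3, n_s·2)`, and let `(c_1,…,c_ℓ)` be the dual sequence.
Then `(b_1,…,b_k) = (c_1,…,c_ℓ)` if and only if `k = 1` and `b_1 = 2`, i.e. iff the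
sequence is the singleton `(2)`. -/
theorem stmt4 (s : ℕ) (n m : ℕ → ℕ) (hne : buildB s n m ≠ []) :
    buildB s n m = buildC s n m ↔ buildB s n m = [(2 : ℤ)] := by
  cases s with
  | zero =>
      simp only [buildB, buildC, if_pos rfl, List.range_zero, List.flatMap_nil,
        List.append_nil] at *
      constructor
      · intro h
        have hl := congrArg List.length h
        simp at hl
        simp [hl]
      · intro h
        have hl := congrArg List.length h
        simp at hl
        simp [hl] at h ⊢
  | succ s =>
      constructor
      · intro h
        exfalso
        have hh := congrArg List.head? h
        rw [buildB, buildC, if_neg (Nat.succ_ne_zero s), List.range_succ_eq_map] at hh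
        rcases Nat.eq_zero_or_pos (n 0) with h0 | h0
        · simp [h0] at hh
          omega
        · obtain ⟨k, hk⟩ := Nat.exists_eq_add_of_lt h0
          simp [hk, List.replicate_succ] at hh
          omega
      · intro h
        exfalso
        rw [buildB, List.range_succ_eq_map] at h
        rcases Nat.eq_zero_or_pos (n 0) with h0 | h0
        · simp [h0] at h
          omega
        · obtain ⟨k, hk⟩ := Nat.exists_eq_add_of_lt h0
          simp [hk, List.replicate_succ] at h
end

section
/- Let b_1, …, b_k be integers ≥ 2 and let (c_1, …, c_ℓ) be the dual sequence of (b_1, …, b_k) as in Riemenschneider/Neumann duality (runs of 2's of length n and entries m+3 are exchanged via (n₀·2, m₁+3, n₁·2, …, m_s+3, n_s·2) ↦ (n₀+2, m₁·2, n₁+3, …, m_s·2, n_s+2), with the convention (n₀·2) ↦ (n₀+1) when s = 0). Then the continued fractions satisfy 1/[b_1,…,b_k] + 1/[c_1,…,c_ℓ] = 1, where [b_1,…,b_k] = b_1 - 1/[b_2,…,b_k]. -/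
/-- Continued fraction `[b_1, …, b_k] = b_1 - 1/[b_2, …, b_k]`, with `[b] = b`
(using the junk value `1/0 = 0` in `ℚ` for the empty list, so that `cfrac [b] = b`). -/
def cfrac : List ℤ → ℚ
  | [] => 0
  | b :: l => (b : ℚ) - 1 / cfrac l

lemma cfrac_cons (b : ℤ) (l : List ℤ) : cfrac (b :: l) = (b : ℚ) - 1 / cfrac l := rfl

lemma buildB_succ (s : ℕ) (n m : ℕ → ℕ) :
    buildB (s + 1) n m = List.replicate (n 0) 2 ++ ((m 1 : ℤ) + 3) ::
      buildB s (n ∘ Nat.succ) (m ∘ Nat.succ) := by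
  simp [buildB, List.range_succ_eq_map, List.flatMap_cons, Function.comp,
    List.flatMap_map, Nat.succ_eq_add_one]

lemma buildC_succ (s : ℕ) (n m : ℕ → ℕ) :
    ∃ c t, buildC s (n ∘ Nat.succ) (m ∘ Nat.succ) = c :: t ∧
      buildC (s + 1) n m = ((n 0 : ℤ) + 2) ::
        (List.replicate (m 1) (2 : ℤ) ++ (c + 1) :: t) := by
  cases s with
  | zero =>
    refine ⟨(n 1 : ℤ) + 1, [], by simp [buildC], ?_⟩
    simp [buildC, List.range_succ_eq_map]
    ring_nf
  | succ k =>
    refine ⟨(n 1 : ℤ) + 2, (List.range (k+1)).flatMap (fun i =>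
      List.replicate (m (i + 2)) (2 : ℤ) ++ [(n (i + 2) : ℤ) + if i + 1 = k + 1 then 2 else 3]),
      by simp [buildC, Function.comp, Nat.succ_eq_add_one], ?_⟩
    simp only [buildC, Nat.succ_ne_zero, if_false, List.range_succ_eq_map,
      List.flatMap_cons, List.flatMap_map, Nat.succ_eq_add_one]
    simp [add_left_inj]
    ring_nf

lemma cfrac_twos (k : ℕ) (L : List ℤ) (p q : ℚ) (hq : 0 < q) (hpq : q < p)
    (h : cfrac L = p / q) :
    cfrac (List.replicate k (2 : ℤ) ++ L)
      = (((k : ℚ) + 1) * p - k * q) / (k * p - ((k : ℚ) - 1) * q) := by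
  induction k with
  | zero => simpa using h
  | succ k ih =>
    have hk : (0:ℚ) ≤ (k : ℚ) := Nat.cast_nonneg k
    have hnum : 0 < ((k : ℚ) + 1) * p - (k : ℚ) * q := by nlinarith
    rw [List.replicate_succ, List.cons_append, cfrac_cons, ih, one_div_div]
    push_cast
    have e1 : ((k:ℚ) + 1) * p - ((k:ℚ) + 1 - 1) * q = ((k:ℚ) + 1) * p - (k:ℚ) * q := by ring
    rw [e1, eq_div_iff hnum.ne', sub_mul, div_mul_cancel₀ _ hnum.ne']
    ring

lemma cfrac_replicate_two (j : ℕ) : cfrac (List.replicate j (2 : ℤ)) = ((j : ℚ) + 1) / j := by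
  induction j with
  | zero => simp [cfrac]
  | succ j ih =>
    have hj : (0:ℚ) ≤ (j : ℚ) := Nat.cast_nonneg j
    rw [List.replicate_succ, cfrac_cons, ih, one_div_div]
    push_cast
    rcases eq_or_lt_of_le hj with h0 | h0
    · rw [← h0]; norm_num
    · rw [eq_div_iff (by positivity), sub_mul, div_mul_cancel₀ _ (by positivity)]
      ring

lemma key (s : ℕ) : ∀ n m : ℕ → ℕ, ∃ p q : ℚ, 0 ≤ q ∧ q < p ∧
    cfrac (buildB s n m) = p / q ∧ cfrac (buildC s n m) = p / (p - q) := by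
  induction s with
  | zero =>
    intro n m
    refine ⟨(n 0 : ℚ) + 1, (n 0 : ℚ), Nat.cast_nonneg _, by linarith, ?_, ?_⟩
    · simpa [buildB] using cfrac_replicate_two (n 0)
    · simp [buildC, cfrac_cons, cfrac]
  | succ s ih =>
    intro n m
    obtain ⟨p, q, hq0, hqp, hB, hC⟩ := ih (n ∘ Nat.succ) (m ∘ Nat.succ)
    have hp : 0 < p := lt_of_le_of_lt hq0 hqp
    set a : ℚ := (n 0 : ℚ) with ha
    set b : ℚ := (m 1 : ℚ) with hb
    have ha0 : 0 ≤ a := Nat.cast_nonneg _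
    have hb0 : 0 ≤ b := Nat.cast_nonneg _
    have hBin : cfrac (((m 1 : ℤ) + 3) :: buildB s (n ∘ Nat.succ) (m ∘ Nat.succ))
        = ((b + 3) * p - q) / p := by
      rw [cfrac_cons, hB, one_div_div]
      push_cast
      rw [eq_div_iff hp.ne']
      field_simp
      rw [hb]; ring
    have h1 : q < (b + 3) * p - q := by nlinarith
    have hBval : cfrac (buildB (s+1) n m)
        = ((a + 1) * ((b + 3) * p - q) - a * p) / (a * ((b + 3) * p - q) - (a - 1) * p) := by
      rw [buildB_succ]
      exact cfrac_twos (n 0) _ _ _ hp (by nlinarith) hBin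
    obtain ⟨c, t, hct, hCs⟩ := buildC_succ s n m
    have hpq' : 0 < p - q := by linarith
    have hCin : cfrac ((c + 1) :: t) = (2 * p - q) / (p - q) := by
      rw [cfrac_cons]
      have := hC
      rw [hct, cfrac_cons] at this
      push_cast
      rw [show ((c:ℚ) + 1 - 1 / cfrac t) = ((c:ℚ) - 1 / cfrac t) + 1 by ring, this]
      rw [eq_div_iff hpq'.ne']
      field_simp
      ring
    have hCtail : cfrac (List.replicate (m 1) (2:ℤ) ++ (c + 1) :: t)
        = ((b + 1) * (2 * p - q) - b * (p - q)) / (b * (2 * p - q) - (b - 1) * (p - q)) :=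
      cfrac_twos (m 1) _ _ _ hpq' (by nlinarith) hCin
    have hden2 : 0 < b * (2 * p - q) - (b - 1) * (p - q) := by nlinarith
    have hnum2 : 0 < (b + 1) * (2 * p - q) - b * (p - q) := by nlinarith
    refine ⟨(a + 1) * ((b + 3) * p - q) - a * p, a * ((b + 3) * p - q) - (a - 1) * p,
      by nlinarith, by nlinarith, hBval, ?_⟩
    have hPQ : (0:ℚ) < (a + 1) * ((b + 3) * p - q) - a * p
        - (a * ((b + 3) * p - q) - (a - 1) * p) := by nlinarith
    rw [hCs, cfrac_cons, hCtail, one_div_div]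
    push_cast
    rw [← ha]
    field_simp [hnum2.ne', hPQ.ne', show b * p + p * 2 - q ≠ 0 by nlinarith]
    have h3 : (2 * p - q) * (b + 1) - b * (p - q) ≠ 0 := by nlinarith
    have h4 : (a + 1) * (p * (b + 3) - q) - a * p - (a * (p * (b + 3) - q) - p * (a - 1)) ≠ 0 := by
      nlinarith
    field_simp [h3, h4]
    ring

/-- (Riemenschneider/Neumann duality.)  For a nonempty sequence
`b_1, …, b_k` of integers `≥ 2` with dual sequence `c_1, …, c_ℓ`, the continued fractions
satisfy `1/[b_1,…,b_k] + 1/[c_1,…,c_ℓ] = 1`. -/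
theorem stmt5 (s : ℕ) (n m : ℕ → ℕ) (hne : buildB s n m ≠ []) :
    1 / cfrac (buildB s n m) + 1 / cfrac (buildC s n m) = 1 := by
  obtain ⟨p, q, hq0, hqp, hB, hC⟩ := key s n m
  have hp : 0 < p := lt_of_le_of_lt hq0 hqp
  rw [hB, hC, one_div_div, one_div_div, ← add_div]
  rw [show q + (p - q) = p by ring, div_self hp.ne']
end

section
/- Let M be a Seifert fibered graph manifold given by a star-shaped plumbing graph with central vertex of weight e and m arms, where arm i consists of a chain with weights e_{i,1}, …, e_{i,s_i}, all ≤ -2. Define the Euler number 𝐞(M) = e - Σ_{i=1}^m 1/[-e_{i,1}, …, -e_{i,s_i}], where [b_1,…,b_s] = b_1 - 1/[b_2,…,b_s]. If the intersection form of the star-shaped graph is negative definite, then 𝐞(M) < 0. -/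
open scoped BigOperators

/-- A real matrix is negative definite iff its negation is positive definite. -/
def Matrix.NegDef {n : Type*} [Fintype n] (M : Matrix n n ℝ) : Prop :=
  (-M).PosDef

/-- The vertex set of a star-shaped graph with center (`none`) and `m` arms, arm `i` being
a chain of length `s i`. -/
abbrev StarV (m : ℕ) (s : Fin m → ℕ) : Type := Option (Σ i : Fin m, Fin (s i))

/-- The intersection matrix of the star-shaped graph: the center `v₀` has weight `e`,
vertex `v_{i,j}` has weight `w i j`, the center is joined to each `v_{i,1}`, and `v_{i,j}`
is joined to `v_{i,j+1}`. -/
def starMatrix (m : ℕ) (s : Fin m → ℕ) (e : ℤ) (w : (i : Fin m) → Fin (s i) → ℤ) :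
    Matrix (StarV m s) (StarV m s) ℝ :=
  fun u v => match u, v with
  | none, none => (e : ℝ)
  | none, some ⟨_, j⟩ => if (j : ℕ) = 0 then 1 else 0
  | some ⟨_, j⟩, none => if (j : ℕ) = 0 then 1 else 0
  | some ⟨i, j⟩, some ⟨i', j'⟩ =>
      if i = i' then
        (if (j : ℕ) = (j' : ℕ) then (w i j : ℝ)
          else if (j : ℕ) + 1 = (j' : ℕ) ∨ (j' : ℕ) + 1 = (j : ℕ) then 1 else 0)
      else 0

lemma cfrac_gt_one : ∀ l : List ℤ, l ≠ [] → (∀ x ∈ l, 2 ≤ x) → 1 < cfrac l := by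
  intro l
  induction l with
  | nil => simp
  | cons b t ih =>
    intro _ hall
    have hb : (2 : ℚ) ≤ (b : ℚ) := by
      exact_mod_cast hall b (List.mem_cons_self)
    rcases eq_or_ne t [] with rfl | ht
    · simp only [cfrac]
      norm_num
      linarith
    · have h1 : 1 < cfrac t := ih ht fun x hx => hall x (List.mem_cons_of_mem _ hx)
      have h2 : 1 / cfrac t < 1 := by
        rw [div_lt_one (by linarith)]; exact h1
      have h3 : 0 < 1 / cfrac t := by positivity
      simp only [cfrac]
      linarith

/-- Let `M` be the Seifert fibered graph manifold given by a star-shaped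
plumbing graph with central vertex of weight `e` and `m` arms, arm `i` being a chain with
weights `e_{i,1}, …, e_{i,s_i}`, all `≤ -2`.  Define the Euler number
`𝐞(M) = e - Σ_{i=1}^m 1/[-e_{i,1}, …, -e_{i,s_i}]`.  If the intersection form of the
star-shaped graph is negative definite, then `𝐞(M) < 0`. -/
theorem stmt9 (m : ℕ) (s : Fin m → ℕ) (hs : ∀ i, 1 ≤ s i)
    (e : ℤ) (w : (i : Fin m) → Fin (s i) → ℤ) (hw : ∀ i j, w i j ≤ -2)
    (hneg : (starMatrix m s e w).NegDef) :
    (e : ℚ) - ∑ i : Fin m, 1 / cfrac (List.ofFn fun j : Fin (s i) => -(w i j)) < 0 := by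
  have key : ∀ i : Fin m, 0 < cfrac (List.ofFn fun j : Fin (s i) => -(w i j)) := by
    intro i
    have hne : (List.ofFn fun j : Fin (s i) => -(w i j)) ≠ [] := by
      have := hs i
      simp [List.ofFn_eq_nil_iff]
      omega
    have := cfrac_gt_one _ hne (by
      intro x hx
      simp only [List.mem_ofFn] at hx
      obtain ⟨j, rfl⟩ := hx
      have := hw i j
      show 2 ≤ -(w i j)
      omega)
    linarith
  have hsum : 0 ≤ ∑ i : Fin m, 1 / cfrac (List.ofFn fun j : Fin (s i) => -(w i j)) :=
    Finset.sum_nonneg fun i _ => (one_div_pos.mpr (key i)).le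
  have he : (e : ℝ) < 0 := by
    have hq := (Matrix.posDef_iff_dotProduct_mulVec.mp hneg).2 (x := Pi.single none 1) (by
      intro h
      have := congrFun h none
      simp at this)
    have : dotProduct (Pi.single (none : StarV m s) (1:ℝ))
        ((-(starMatrix m s e w)).mulVec (Pi.single none 1)) = -(e : ℝ) := by
      rw [dotProduct_comm, dotProduct_single]
      simp [Matrix.mulVec_single, starMatrix]
    simp only [star_trivial] at hq
    rw [this] at hq
    linarith
  have he' : (e : ℚ) < 0 := by exact_mod_cast he
  linarith
end

section
/- Let α ∈ {1,-1}, β ∈ ℤ, and set H = [[α, 0], [β, α]] (note the lower-right entry is +α, the 'orientation-preserving' case). Let B = [[d_k, c_k], [-d_{k-1}, -c_{k-1}]] with c_{k-1}d_k - c_k d_{k-1} = 1, gcd(c_k,d_k) = 1, c_k ≥ k+1 ≥ 2, d_k ≥ k ≥ 1. If B·H·B⁻¹ also has the form [[α', 0], [β', α']] for some α' ∈ {1,-1}, β' ∈ ℤ, then α' = α and β = β' = 0. -/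
/-- Let `α ∈ {1,-1}`, `β ∈ ℤ`, `H = [[α,0],[β,α]]`, and let
`B = [[d_k, c_k], [-d_{k-1}, -c_{k-1}]]` with `c_{k-1}d_k - c_k d_{k-1} = 1`,
`gcd(c_k, d_k) = 1`, `c_k ≥ k+1 ≥ 2`, `d_k ≥ k ≥ 1`.  If `B·H·B⁻¹` also has the form
`[[α',0],[β',α']]` with `α' ∈ {1,-1}`, `β' ∈ ℤ`, then `α' = α` and `β = β' = 0`. -/
theorem stmt13 (α β : ℤ) (hα : α = 1 ∨ α = -1)
    (k : ℕ) (hk : 1 ≤ k)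
    (ck dk ck1 dk1 : ℤ)
    (hdet : ck1 * dk - ck * dk1 = 1)
    (hgcd : Int.gcd ck dk = 1)
    (hck : (k : ℤ) + 1 ≤ ck) (hdk : (k : ℤ) ≤ dk)
    (H B : Matrix (Fin 2) (Fin 2) ℚ)
    (hH : H = !![(α : ℚ), 0; (β : ℚ), (α : ℚ)])
    (hB : B = !![(dk : ℚ), (ck : ℚ); -(dk1 : ℚ), -(ck1 : ℚ)])
    (α' β' : ℤ) (hα' : α' = 1 ∨ α' = -1)
    (hconj : B * H * B⁻¹ = !![(α' : ℚ), 0; (β' : ℚ), (α' : ℚ)]) :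
    α' = α ∧ β = 0 ∧ β' = 0 := by
  have hckpos : (0 : ℤ) < ck := by
    have : (1 : ℤ) ≤ (k : ℤ) := by exact_mod_cast hk
    linarith
  have hckQpos : (0 : ℚ) < (ck : ℚ) := by exact_mod_cast hckpos
  have hckQ : ((ck : ℚ)) ≠ 0 := ne_of_gt hckQpos
  have hdetQ : (ck1 : ℚ) * dk - ck * dk1 = 1 := by exact_mod_cast hdet
  have hdetB : IsUnit B.det := by
    rw [hB, Matrix.det_fin_two_of]
    have : (dk : ℚ) * -(ck1 : ℚ) - (ck : ℚ) * -(dk1 : ℚ) = -1 := by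
      linear_combination -hdetQ
    rw [this]
    exact IsUnit.of_mul_eq_one (a := (-1 : ℚ)) (-1) (by norm_num)
  have hmul : B * H = !![(α' : ℚ), 0; (β' : ℚ), (α' : ℚ)] * B := by
    have := congrArg (· * B) hconj
    simpa [Matrix.nonsing_inv_mul_cancel_right _ _ hdetB] using this
  rw [hB, hH] at hmul
  have h01 := congrFun (congrFun hmul 0) 1
  have h00 := congrFun (congrFun hmul 0) 0
  have h11 := congrFun (congrFun hmul 1) 1
  simp [Matrix.mul_apply, Fin.sum_univ_two] at h01 h00 h11
  -- h01 : ck * α = α' * ck  (roughly)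
  have hαα' : (α' : ℚ) = (α : ℚ) := by
    rcases hα with rfl | rfl <;> rcases hα' with rfl | rfl <;>
      push_cast at h01 ⊢ <;> first | rfl | (exfalso; nlinarith [hckQpos, h01])
  have hβ : (β : ℚ) = 0 := by
    rw [hαα'] at h00
    have : (ck : ℚ) * (β : ℚ) = 0 := by nlinarith [h00]
    rcases mul_eq_zero.mp this with h | h
    · exact absurd h hckQ
    · exact h
  have hβ' : (β' : ℚ) = 0 := by
    rw [hαα'] at h11
    have : (β' : ℚ) * (ck : ℚ) = 0 := by nlinarith [h11]
    rcases mul_eq_zero.mp this with h | h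
    · exact h
    · exact absurd h hckQ
  refine ⟨by exact_mod_cast hαα', by exact_mod_cast hβ, by exact_mod_cast hβ'⟩
end
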